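/- Let E be a finite-dimensional real inner product space and let φ be an invertible linear map on E with ‖φ‖ ≤ C and ‖φ⁻¹‖ ≤ C for some C ≥ 1. Then the induced map on the projective space of E is C²-Lipschitz with respect to the angle metric α(x̄,ȳ) = arccos(|⟨x,y⟩|/(‖x‖‖y‖)). -/

import Mathlib

open RealInnerProductSpace

/-- The projective angle metric between (the lines spanned by) two vectors. -/
noncomputable def projAngle {E : Type*} [NormedAddCommGroup E] [InnerProductSpace ℝ E]
    (x y : E) : ℝ := Real.arccos (|(inner ℝ x y : ℝ)| / (‖x‖ * ‖y‖))

open Real Filter Topology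

section Aux

variable {E : Type*} [NormedAddCommGroup E] [InnerProductSpace ℝ E]

lemma projAngle_nonneg (x y : E) : 0 ≤ projAngle x y := Real.arccos_nonneg _

lemma projAngle_le_pi_div_two (x y : E) : projAngle x y ≤ π / 2 :=
  Real.arccos_le_pi_div_two.2 (by positivity)

lemma projAngle_self {x : E} (hx : x ≠ 0) : projAngle x x = 0 := by
  have h : (0:ℝ) < ‖x‖ := norm_pos_iff.2 hx
  rw [projAngle, real_inner_self_eq_norm_mul_norm, abs_of_nonneg (by positivity),
    div_self (by positivity : (0:ℝ) < ‖x‖ * ‖x‖).ne', Real.arccos_one]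

lemma projAngle_smul_left {x : E} (y : E) {a : ℝ} (ha : a ≠ 0) :
    projAngle (a • x) y = projAngle x y := by
  rw [projAngle, projAngle, real_inner_smul_left, abs_mul, norm_smul, Real.norm_eq_abs,
    mul_assoc, mul_div_mul_left _ _ (abs_ne_zero.2 ha)]

lemma projAngle_smul_right (x : E) {y : E} {a : ℝ} (ha : a ≠ 0) :
    projAngle x (a • y) = projAngle x y := by
  rw [projAngle, projAngle, real_inner_smul_right, abs_mul, norm_smul, Real.norm_eq_abs,
    show ‖x‖ * (|a| * ‖y‖) = |a| * (‖x‖ * ‖y‖) by ring,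
    mul_div_mul_left _ _ (abs_ne_zero.2 ha)]

lemma projAngle_of_unit {u v : E} (hu : ‖u‖ = 1) (hv : ‖v‖ = 1) :
    projAngle u v = Real.arccos |(inner ℝ u v : ℝ)| := by
  rw [projAngle, hu, hv, mul_one, div_one]

lemma arccos_le_arccos' {x y : ℝ} (h : x ≤ y) : Real.arccos y ≤ Real.arccos x := by
  rw [Real.arccos, Real.arccos]
  have := Real.monotone_arcsin h
  linarith

/-- Gram determinant bound: for any `t`, `G(p,q) ≤ ‖q‖² ‖p - t q‖²`. -/
lemma gram_le_aux (p q : E) (t : ℝ) :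
    ‖p‖^2 * ‖q‖^2 - (inner ℝ p q : ℝ)^2 ≤ ‖q‖^2 * ‖p - t • q‖^2 := by
  have h := norm_sub_sq_real p (t • q)
  rw [real_inner_smul_right, norm_smul, Real.norm_eq_abs] at h
  have h2 : (|t| * ‖q‖)^2 = t^2 * ‖q‖^2 := by rw [mul_pow, sq_abs]
  nlinarith [sq_nonneg ((inner ℝ p q : ℝ) - t * ‖q‖^2), sq_nonneg (‖p - t • q‖)]

set_option maxHeartbeats 1000000 in
/-- The sine of the projective angle is expanded by at most `C²` under `φ`. -/
lemma sin_projAngle_map_le (φ : E ≃L[ℝ] E) {C : ℝ} (hC : 1 ≤ C)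
    (hφ : ‖(φ : E →L[ℝ] E)‖ ≤ C) (hφinv : ‖(φ.symm : E →L[ℝ] E)‖ ≤ C)
    {a b : E} (ha : a ≠ 0) (hb : b ≠ 0) :
    Real.sin (projAngle (φ a) (φ b)) ≤ C^2 * Real.sin (projAngle a b) := by
  have hC0 : (0:ℝ) < C := lt_of_lt_of_le one_pos hC
  have hfa : φ a ≠ 0 := fun h => ha (by simpa using congrArg φ.symm h)
  have hfb : φ b ≠ 0 := fun h => hb (by simpa using congrArg φ.symm h)
  have hna : (0:ℝ) < ‖a‖ := norm_pos_iff.2 ha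
  have hnb : (0:ℝ) < ‖b‖ := norm_pos_iff.2 hb
  have hnfa : (0:ℝ) < ‖φ a‖ := norm_pos_iff.2 hfa
  have hnfb : (0:ℝ) < ‖φ b‖ := norm_pos_iff.2 hfb
  set i1 : ℝ := inner ℝ a b with hi1
  set i2 : ℝ := inner ℝ (φ a) (φ b) with hi2
  set t : ℝ := i1 / ‖b‖^2 with ht
  have hCS : i1^2 ≤ ‖a‖^2 * ‖b‖^2 := by
    have := abs_real_inner_le_norm a b
    nlinarith [abs_nonneg i1, sq_abs i1]
  have key1 : ‖φ a‖^2 * ‖φ b‖^2 - i2^2 ≤ ‖φ b‖^2 * ‖φ (a - t • b)‖^2 := by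
    have := gram_le_aux (φ a) (φ b) t
    have e1 : φ a - t • φ b = φ (a - t • b) := by
      rw [map_sub, map_smul]
    rw [e1] at this
    exact this
  have key2 : ‖φ (a - t • b)‖ ≤ C * ‖a - t • b‖ :=
    le_trans ((φ : E →L[ℝ] E).le_opNorm _)
      (mul_le_mul_of_nonneg_right hφ (norm_nonneg _))
  have key3 : ‖a - t • b‖^2 * ‖b‖^2 = ‖a‖^2 * ‖b‖^2 - i1^2 := by
    have h := norm_sub_sq_real a (t • b)
    rw [real_inner_smul_right, norm_smul, Real.norm_eq_abs, ← hi1] at h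
    have h2 : (|t| * ‖b‖)^2 = t^2 * ‖b‖^2 := by rw [mul_pow, sq_abs]
    rw [h, h2, ht]
    field_simp
    ring
  have key4 : ‖a‖ ≤ C * ‖φ a‖ := by
    have h := (φ.symm : E →L[ℝ] E).le_opNorm (φ a)
    rw [show (φ.symm : E →L[ℝ] E) (φ a) = a by simp] at h
    exact le_trans h (mul_le_mul_of_nonneg_right hφinv (norm_nonneg _))
  have h52 : ‖φ (a - t • b)‖^2 ≤ C^2 * ‖a - t • b‖^2 := by
    nlinarith [norm_nonneg (φ (a - t • b)), norm_nonneg (a - t • b)]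
  have h5 : (‖φ a‖^2 * ‖φ b‖^2 - i2^2) * ‖b‖^2
      ≤ C^2 * ‖φ b‖^2 * (‖a‖^2 * ‖b‖^2 - i1^2) := by
    calc (‖φ a‖^2 * ‖φ b‖^2 - i2^2) * ‖b‖^2
        ≤ (‖φ b‖^2 * ‖φ (a - t • b)‖^2) * ‖b‖^2 :=
          mul_le_mul_of_nonneg_right key1 (sq_nonneg _)
      _ ≤ (‖φ b‖^2 * (C^2 * ‖a - t • b‖^2)) * ‖b‖^2 :=
          mul_le_mul_of_nonneg_right
            (mul_le_mul_of_nonneg_left h52 (sq_nonneg _)) (sq_nonneg _)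
      _ = C^2 * ‖φ b‖^2 * (‖a - t • b‖^2 * ‖b‖^2) := by ring
      _ = C^2 * ‖φ b‖^2 * (‖a‖^2 * ‖b‖^2 - i1^2) := by rw [key3]
  have h6 : ‖a‖^2 ≤ C^2 * ‖φ a‖^2 := by nlinarith [norm_nonneg a, norm_nonneg (φ a)]
  have hG : 0 ≤ ‖a‖^2 * ‖b‖^2 - i1^2 := sub_nonneg.2 hCS
  have goal' : (‖φ a‖^2 * ‖φ b‖^2 - i2^2) * (‖a‖^2 * ‖b‖^2)
      ≤ C^4 * (‖a‖^2 * ‖b‖^2 - i1^2) * (‖φ a‖^2 * ‖φ b‖^2) := by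
    calc (‖φ a‖^2 * ‖φ b‖^2 - i2^2) * (‖a‖^2 * ‖b‖^2)
        = ((‖φ a‖^2 * ‖φ b‖^2 - i2^2) * ‖b‖^2) * ‖a‖^2 := by ring
      _ ≤ (C^2 * ‖φ b‖^2 * (‖a‖^2 * ‖b‖^2 - i1^2)) * ‖a‖^2 :=
          mul_le_mul_of_nonneg_right h5 (sq_nonneg _)
      _ ≤ (C^2 * ‖φ b‖^2 * (‖a‖^2 * ‖b‖^2 - i1^2)) * (C^2 * ‖φ a‖^2) :=
          mul_le_mul_of_nonneg_left h6
            (mul_nonneg (mul_nonneg (sq_nonneg C) (sq_nonneg ‖φ b‖)) hG)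
      _ = C^4 * (‖a‖^2 * ‖b‖^2 - i1^2) * (‖φ a‖^2 * ‖φ b‖^2) := by ring
  rw [projAngle, projAngle, Real.sin_arccos, Real.sin_arccos, ← hi1, ← hi2]
  have e2 : C^2 * Real.sqrt (1 - (|i1| / (‖a‖ * ‖b‖))^2)
      = Real.sqrt ((C^2)^2 * (1 - (|i1| / (‖a‖ * ‖b‖))^2)) := by
    rw [Real.sqrt_mul (by positivity), Real.sqrt_sq (by positivity)]
  rw [e2]
  apply Real.sqrt_le_sqrt
  have e3 : 1 - (|i2| / (‖φ a‖ * ‖φ b‖))^2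
      = (‖φ a‖^2 * ‖φ b‖^2 - i2^2) / (‖φ a‖^2 * ‖φ b‖^2) := by
    rw [div_pow, sq_abs]
    field_simp
  have e4 : 1 - (|i1| / (‖a‖ * ‖b‖))^2 = (‖a‖^2 * ‖b‖^2 - i1^2) / (‖a‖^2 * ‖b‖^2) := by
    rw [div_pow, sq_abs]
    field_simp
  rw [e3, e4, ← mul_div_assoc, div_le_div_iff₀ (by positivity) (by positivity)]
  nlinarith [goal']

/-- Spherical triangle inequality for unit vectors. -/
lemma arccos_abs_inner_triangle {u v w : E} (hu : ‖u‖ = 1) (hv : ‖v‖ = 1) (hw : ‖w‖ = 1) :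
    Real.arccos |(inner ℝ u w : ℝ)| ≤
      Real.arccos |(inner ℝ u v : ℝ)| + Real.arccos |(inner ℝ v w : ℝ)| := by
  set a : ℝ := inner ℝ u v with hadef
  set b : ℝ := inner ℝ v w with hbdef
  set c : ℝ := inner ℝ u w with hcdef
  have ha1 : |a| ≤ 1 := by simpa [hu, hv] using abs_real_inner_le_norm u v
  have hb1 : |b| ≤ 1 := by simpa [hv, hw] using abs_real_inner_le_norm v w
  have hc1 : |c| ≤ 1 := by simpa [hu, hw] using abs_real_inner_le_norm u w
  by_cases hcase : π / 2 ≤ Real.arccos |a| + Real.arccos |b|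
  · exact le_trans (Real.arccos_le_pi_div_two.2 (abs_nonneg c)) hcase
  push_neg at hcase
  have hvv : (inner ℝ v v : ℝ) = 1 := by
    rw [real_inner_self_eq_norm_mul_norm, hv]; norm_num
  have hp : (inner ℝ (u - a • v) (w - b • v) : ℝ) = c - a * b := by
    rw [inner_sub_left, inner_sub_right, inner_sub_right, real_inner_smul_left,
      real_inner_smul_left, real_inner_smul_right, real_inner_smul_right, hvv]
    simp only [hadef, hbdef, hcdef, real_inner_comm u v]
    ring
  have hnu : ‖u - a • v‖ = Real.sqrt (1 - a^2) := by
    rw [← Real.sqrt_sq (norm_nonneg (u - a • v))]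
    congr 1
    rw [norm_sub_sq_real, real_inner_smul_right, norm_smul, Real.norm_eq_abs, hu]
    rw [mul_pow, sq_abs, hv]
    ring
  have hnw : ‖w - b • v‖ = Real.sqrt (1 - b^2) := by
    rw [← Real.sqrt_sq (norm_nonneg (w - b • v))]
    congr 1
    rw [norm_sub_sq_real, real_inner_smul_right, norm_smul, Real.norm_eq_abs, hw]
    rw [mul_pow, sq_abs, hv]
    simp only [hbdef, real_inner_comm v w]
    ring
  have hCS : |c - a * b| ≤ Real.sqrt (1 - a^2) * Real.sqrt (1 - b^2) := by
    rw [← hnu, ← hnw, ← hp]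
    exact abs_real_inner_le_norm _ _
  have hcos : Real.cos (Real.arccos |a| + Real.arccos |b|)
      = |a| * |b| - Real.sqrt (1 - a^2) * Real.sqrt (1 - b^2) := by
    rw [Real.cos_add, Real.cos_arccos (by linarith [abs_nonneg a]) ha1,
      Real.cos_arccos (by linarith [abs_nonneg b]) hb1,
      Real.sin_arccos, Real.sin_arccos, sq_abs, sq_abs]
  have h1 : Real.cos (Real.arccos |a| + Real.arccos |b|) ≤ |c| := by
    rw [hcos]
    have habs : |a| * |b| - |c| ≤ |c - a * b| := by
      rw [abs_sub_comm]
      calc |a| * |b| - |c| = |a * b| - |c| := by rw [abs_mul]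
        _ ≤ |a * b - c| := abs_sub_abs_le_abs_sub _ _
    linarith
  calc Real.arccos |c| ≤ Real.arccos (Real.cos (Real.arccos |a| + Real.arccos |b|)) :=
        arccos_le_arccos' h1
    _ = Real.arccos |a| + Real.arccos |b| :=
        Real.arccos_cos
          (by linarith [Real.arccos_nonneg |a|, Real.arccos_nonneg |b|])
          (by linarith [Real.pi_pos])

/-- Triangle inequality for the projective angle. -/
lemma projAngle_triangle {x y z : E} (hx : x ≠ 0) (hy : y ≠ 0) (hz : z ≠ 0) :
    projAngle x z ≤ projAngle x y + projAngle y z := by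
  have hnorm : ∀ p : E, p ≠ 0 → ‖‖p‖⁻¹ • p‖ = 1 := fun p hp => by
    rw [norm_smul, Real.norm_eq_abs, abs_inv, abs_norm,
      inv_mul_cancel₀ (norm_ne_zero_iff.2 hp)]
  have hu := hnorm x hx
  have hv := hnorm y hy
  have hw := hnorm z hz
  have hxi : (‖x‖⁻¹ : ℝ) ≠ 0 := inv_ne_zero (norm_ne_zero_iff.2 hx)
  have hyi : (‖y‖⁻¹ : ℝ) ≠ 0 := inv_ne_zero (norm_ne_zero_iff.2 hy)
  have hzi : (‖z‖⁻¹ : ℝ) ≠ 0 := inv_ne_zero (norm_ne_zero_iff.2 hz)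
  have e1 : projAngle x z = projAngle (‖x‖⁻¹ • x) (‖z‖⁻¹ • z) := by
    rw [projAngle_smul_left _ hxi, projAngle_smul_right _ hzi]
  have e2 : projAngle x y = projAngle (‖x‖⁻¹ • x) (‖y‖⁻¹ • y) := by
    rw [projAngle_smul_left _ hxi, projAngle_smul_right _ hyi]
  have e3 : projAngle y z = projAngle (‖y‖⁻¹ • y) (‖z‖⁻¹ • z) := by
    rw [projAngle_smul_left _ hyi, projAngle_smul_right _ hzi]
  rw [e1, e2, e3, projAngle_of_unit hu hw, projAngle_of_unit hu hv, projAngle_of_unit hv hw]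
  exact arccos_abs_inner_triangle hu hv hw

end Aux

lemma tendsto_n_arcsin (K : ℝ) {α : ℝ} (hα : 0 < α) :
    Tendsto (fun n : ℕ => (n : ℝ) * Real.arcsin (K * Real.sin (α / n)))
      atTop (𝓝 (K * α)) := by
  set f : ℝ → ℝ := fun t => Real.arcsin (K * Real.sin t) with hf
  have hder : HasDerivAt f K 0 := by
    have h1 : HasDerivAt (fun t => K * Real.sin t) (K * Real.cos 0) 0 :=
      (Real.hasDerivAt_sin 0).const_mul K
    have h2 : HasDerivAt Real.arcsin
        (1 / Real.sqrt (1 - (K * Real.sin 0) ^ 2)) (K * Real.sin 0) :=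
      Real.hasDerivAt_arcsin (by simp) (by simp)
    have := h2.comp 0 h1
    have h3 := HasDerivAt.comp (0:ℝ) h2 h1
    simp only [Function.comp_def, Real.sin_zero, Real.cos_zero, mul_zero, mul_one,
      zero_pow two_ne_zero, sub_zero, Real.sqrt_one, div_one, one_mul] at h3
    exact h3
  have hslope : Tendsto (slope f 0) (𝓝[≠] 0) (𝓝 K) :=
    hasDerivAt_iff_tendsto_slope.mp hder
  have hseq : Tendsto (fun n : ℕ => α / n) atTop (𝓝[≠] (0:ℝ)) := by
    rw [tendsto_nhdsWithin_iff]
    constructor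
    · exact tendsto_const_div_atTop_nhds_zero_nat α
    · filter_upwards [eventually_ge_atTop 1] with n hn
      have : (0:ℝ) < n := by exact_mod_cast Nat.lt_of_lt_of_le Nat.zero_lt_one hn
      simp only [Set.mem_compl_iff, Set.mem_singleton_iff]
      positivity
  have hcomp : Tendsto (fun n : ℕ => α * slope f 0 (α / n)) atTop (𝓝 (α * K)) :=
    (hslope.comp hseq).const_mul α
  have heq : ∀ᶠ n : ℕ in atTop,
      α * slope f 0 (α / n) = (n : ℝ) * Real.arcsin (K * Real.sin (α / n)) := by
    filter_upwards [eventually_ge_atTop 1] with n hn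
    have hn0 : (0:ℝ) < n := by exact_mod_cast Nat.lt_of_lt_of_le Nat.zero_lt_one hn
    have hf0 : f 0 = 0 := by simp [hf]
    rw [slope_def_field, hf0, sub_zero, sub_zero]
    field_simp
    ring
  have := hcomp.congr' heq
  rwa [mul_comm] at this

/-- A bi-bounded invertible linear map induces a `C²`-Lipschitz map on projective space. -/
theorem lipschitz_projective_of_bounded {E : Type*} [NormedAddCommGroup E]
    [InnerProductSpace ℝ E] [FiniteDimensional ℝ E]
    (φ : E ≃L[ℝ] E) (C : ℝ) (hC : 1 ≤ C)
    (hφ : ‖(φ : E →L[ℝ] E)‖ ≤ C) (hφinv : ‖(φ.symm : E →L[ℝ] E)‖ ≤ C) :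
    ∀ x y : E, x ≠ 0 → y ≠ 0 →
      projAngle (φ x) (φ y) ≤ C ^ 2 * projAngle x y := by
  intro x y hx hy
  have hC0 : (0:ℝ) < C := lt_of_lt_of_le one_pos hC
  have hnorm : ∀ p : E, p ≠ 0 → ‖‖p‖⁻¹ • p‖ = 1 := fun p hp => by
    rw [norm_smul, Real.norm_eq_abs, abs_inv, abs_norm,
      inv_mul_cancel₀ (norm_ne_zero_iff.2 hp)]
  have hφne : ∀ p : E, p ≠ 0 → φ p ≠ 0 := fun p hp h => hp (by simpa using congrArg φ.symm h)
  have hxi : (‖x‖⁻¹ : ℝ) ≠ 0 := inv_ne_zero (norm_ne_zero_iff.2 hx)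
  have hyi : (‖y‖⁻¹ : ℝ) ≠ 0 := inv_ne_zero (norm_ne_zero_iff.2 hy)
  set v₀ : E := ‖y‖⁻¹ • y with hv0def
  set u : E := ‖x‖⁻¹ • x with hudef
  have hu : ‖u‖ = 1 := hnorm x hx
  have hv₀ : ‖v₀‖ = 1 := hnorm y hy
  set ε : ℝ := if (0:ℝ) ≤ inner ℝ u v₀ then 1 else -1 with hεdef
  have hε : ε ≠ 0 := by rw [hεdef]; split <;> norm_num
  have hε1 : |ε| = 1 := by rw [hεdef]; split <;> norm_num
  set v : E := ε • v₀ with hvdef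
  have hv : ‖v‖ = 1 := by rw [hvdef, norm_smul, Real.norm_eq_abs, hε1, hv₀, one_mul]
  have hune : u ≠ 0 := fun h => by rw [h, norm_zero] at hu; norm_num at hu
  have hvne : v ≠ 0 := fun h => by rw [h, norm_zero] at hv; norm_num at hv
  have hc0 : (0:ℝ) ≤ inner ℝ u v := by
    rw [hvdef, real_inner_smul_right, hεdef]
    split
    · next h => simpa using h
    · next h => push_neg at h; nlinarith
  set c : ℝ := inner ℝ u v with hcdef
  have hcabs : |c| ≤ 1 := by simpa [hu, hv] using abs_real_inner_le_norm u v
  have hc1 : c ≤ 1 := le_trans (le_abs_self c) hcabs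
  have hcm1 : (-1:ℝ) ≤ c := by linarith [abs_le.1 hcabs |>.1]
  have huv : projAngle u v = projAngle x y := by
    rw [hudef, hvdef, hv0def, projAngle_smul_left _ hxi, projAngle_smul_right _ hε,
      projAngle_smul_right _ hyi]
  have himg : projAngle (φ u) (φ v) = projAngle (φ x) (φ y) := by
    rw [hudef, hvdef, hv0def, map_smul, map_smul, map_smul,
      projAngle_smul_left _ hxi, projAngle_smul_right _ hε, projAngle_smul_right _ hyi]
  set α : ℝ := Real.arccos c with hαdef
  have hαuv : projAngle u v = α := by
    rw [projAngle_of_unit hu hv, ← hcdef, abs_of_nonneg hc0]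
  have hxyα : projAngle x y = α := by rw [← huv, hαuv]
  have hαnn : 0 ≤ α := Real.arccos_nonneg c
  have hαle : α ≤ π / 2 := Real.arccos_le_pi_div_two.2 hc0
  rw [← himg, hxyα]
  -- goal : projAngle (φ u) (φ v) ≤ C ^ 2 * α
  rcases eq_or_lt_of_le hαnn with hα0 | hαpos
  · -- zero angle case
    have hsin : Real.sin (projAngle (φ u) (φ v)) ≤ C^2 * Real.sin (projAngle u v) :=
      sin_projAngle_map_le φ hC hφ hφinv hune hvne
    rw [hαuv, ← hα0, Real.sin_zero, mul_zero] at hsin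
    have hnn := projAngle_nonneg (φ u) (φ v)
    have hle := projAngle_le_pi_div_two (φ u) (φ v)
    have hsin0 : Real.sin (projAngle (φ u) (φ v)) = 0 :=
      le_antisymm hsin
        (Real.sin_nonneg_of_nonneg_of_le_pi hnn (by linarith [Real.pi_pos]))
    have h0 : projAngle (φ u) (φ v) = 0 :=
      (Real.sin_eq_zero_iff_of_lt_of_lt (by linarith [Real.pi_pos])
        (by linarith [Real.pi_pos])).1 hsin0
    rw [h0, ← hα0, mul_zero]
  · -- positive angle case: geodesic subdivision
    have hclt : c < 1 := Real.arccos_pos.mp (hαdef ▸ hαpos)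
    have hsinα : Real.sin α = Real.sqrt (1 - c^2) := by rw [hαdef, Real.sin_arccos]
    have hsinpos : 0 < Real.sin α :=
      Real.sin_pos_of_pos_of_lt_pi hαpos (by linarith [Real.pi_pos])
    have huu : (inner ℝ u u : ℝ) = 1 := by
      rw [real_inner_self_eq_norm_mul_norm, hu]; norm_num
    have hnvc : ‖v - c • u‖ = Real.sqrt (1 - c^2) := by
      rw [← Real.sqrt_sq (norm_nonneg (v - c • u))]
      congr 1
      have h1 : (inner ℝ v (c • u) : ℝ) = c * c := by
        rw [real_inner_smul_right, real_inner_comm u v, ← hcdef]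
      have h2 : ‖c • u‖^2 = c^2 := by
        rw [norm_smul, Real.norm_eq_abs, hu, mul_one, sq_abs]
      rw [norm_sub_sq_real, h1, h2, hv]
      ring
    set w : E := (Real.sin α)⁻¹ • (v - c • u) with hwdef
    have hw : ‖w‖ = 1 := by
      rw [hwdef, norm_smul, Real.norm_eq_abs, abs_inv, abs_of_pos hsinpos, hnvc, ← hsinα,
        inv_mul_cancel₀ hsinpos.ne']
    have huw : (inner ℝ u w : ℝ) = 0 := by
      have h1 : (inner ℝ u (c • u) : ℝ) = c := by rw [real_inner_smul_right, huu, mul_one]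
      rw [hwdef, real_inner_smul_right, inner_sub_right, h1, ← hcdef, sub_self, mul_zero]
    have hwu : (inner ℝ w u : ℝ) = 0 := by rw [real_inner_comm]; exact huw
    have hww : (inner ℝ w w : ℝ) = 1 := by
      rw [real_inner_self_eq_norm_mul_norm, hw]; norm_num
    set γ : ℝ → E := fun t => Real.cos t • u + Real.sin t • w with hγdef
    have hγγ : ∀ s t : ℝ, (inner ℝ (γ s) (γ t) : ℝ) = Real.cos (s - t) := by
      intro s t
      simp only [hγdef, inner_add_left, inner_add_right, real_inner_smul_left,
        real_inner_smul_right, huu, hww, huw, hwu]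
      rw [Real.cos_sub]
      ring
    have hγn : ∀ t, ‖γ t‖ = 1 := by
      intro t
      have h := hγγ t t
      rw [sub_self, Real.cos_zero, real_inner_self_eq_norm_mul_norm] at h
      rcases mul_self_eq_one_iff.1 h with h1 | h1
      · exact h1
      · linarith [norm_nonneg (γ t)]
    have hγne : ∀ t, γ t ≠ 0 := fun t h => by
      have := hγn t; rw [h, norm_zero] at this; norm_num at this
    have hγ0 : γ 0 = u := by simp [hγdef]
    have hcosα : Real.cos α = c := by rw [hαdef]; exact Real.cos_arccos hcm1 hc1
    have hγα : γ α = v := by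
      have hsw : Real.sin α • w = v - c • u := by
        rw [hwdef, smul_smul, mul_inv_cancel₀ hsinpos.ne', one_smul]
      simp only [hγdef]
      rw [hcosα, hsw]
      module
    have hang : ∀ s t : ℝ, |s - t| ≤ π / 2 → projAngle (γ s) (γ t) = |s - t| := by
      intro s t hst
      rw [projAngle_of_unit (hγn s) (hγn t), hγγ, ← Real.cos_abs,
        abs_of_nonneg (Real.cos_nonneg_of_mem_Icc ⟨by linarith [abs_nonneg (s - t),
          Real.pi_pos], hst⟩)]
      exact Real.arccos_cos (abs_nonneg _) (by linarith [Real.pi_pos])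
    -- the subdivision chain
    have chain : ∀ n : ℕ, 1 ≤ n → ∀ m : ℕ,
        projAngle (φ (γ 0)) (φ (γ (m * (α / n))))
          ≤ m * Real.arcsin (C^2 * Real.sin (α / n)) := by
      intro n hn
      have hnpos : (0:ℝ) < n := by exact_mod_cast Nat.lt_of_lt_of_le Nat.zero_lt_one hn
      have hh0 : 0 ≤ α / n := by positivity
      have hhle : α / n ≤ π / 2 :=
        le_trans (div_le_self hαnn (by exact_mod_cast hn)) hαle
      intro m
      induction m with
      | zero =>
        simp only [Nat.cast_zero, zero_mul]
        rw [projAngle_self (hφne _ (hγne 0))]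
      | succ m ih =>
        have hstep : projAngle (φ (γ (m * (α / n)))) (φ (γ ((m + 1 : ℕ) * (α / n))))
            ≤ Real.arcsin (C^2 * Real.sin (α / n)) := by
          have hdiff : |(m : ℝ) * (α / n) - ((m + 1 : ℕ) : ℝ) * (α / n)| = α / n := by
            rw [show (m : ℝ) * (α / n) - ((m + 1 : ℕ) : ℝ) * (α / n) = -(α / n) by
              push_cast; ring, abs_neg, abs_of_nonneg hh0]
          have hpa : projAngle (γ (m * (α / n))) (γ ((m + 1 : ℕ) * (α / n))) = α / n := by
            rw [hang _ _ (by rw [hdiff]; exact hhle), hdiff]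
          have hs := sin_projAngle_map_le φ hC hφ hφinv (hγne ((m : ℝ) * (α / n)))
            (hγne (((m + 1 : ℕ) : ℝ) * (α / n)))
          rw [hpa] at hs
          have hT1 := projAngle_nonneg (φ (γ (m * (α / n)))) (φ (γ ((m + 1 : ℕ) * (α / n))))
          have hT2 := projAngle_le_pi_div_two (φ (γ (m * (α / n))))
            (φ (γ ((m + 1 : ℕ) * (α / n))))
          calc projAngle (φ (γ (m * (α / n)))) (φ (γ ((m + 1 : ℕ) * (α / n))))
              = Real.arcsin (Real.sin (projAngle (φ (γ (m * (α / n))))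
                  (φ (γ ((m + 1 : ℕ) * (α / n)))))) :=
                (Real.arcsin_sin (by linarith [Real.pi_pos]) hT2).symm
            _ ≤ Real.arcsin (C^2 * Real.sin (α / n)) := Real.monotone_arcsin hs
        have tri := projAngle_triangle (hφne _ (hγne 0)) (hφne _ (hγne (m * (α / n))))
          (hφne _ (hγne ((m + 1 : ℕ) * (α / n))))
        push_cast at ih hstep tri ⊢
        linarith
    have hev : ∀ᶠ n : ℕ in atTop,
        projAngle (φ u) (φ v) ≤ (n : ℝ) * Real.arcsin (C^2 * Real.sin (α / n)) := by
      filter_upwards [eventually_ge_atTop 1] with n hn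
      have hnpos : (0:ℝ) < n := by exact_mod_cast Nat.lt_of_lt_of_le Nat.zero_lt_one hn
      have h := chain n hn n
      rw [show ((n : ℕ) : ℝ) * (α / n) = α by field_simp] at h
      rw [hγ0, hγα] at h
      exact h
    exact ge_of_tendsto (tendsto_n_arcsin (C^2) hαpos) hev
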